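/- For the AND function f(x) = ∏_{j=1}^n x_j on {0,1}^n, the minimal possible revealment over all randomized decision-tree algorithms determining f is exactly (2 - 2^{1-n})/n. -/

import Mathlib

open Finset

/-- A (deterministic) decision tree on `n` input bits. -/
inductive DTree (n : ℕ) where
  | leaf (b : Bool)
  | node (i : Fin n) (t0 t1 : DTree n)

/-- The Boolean value computed by a decision tree. -/
def DTree.eval {n : ℕ} : DTree n → (Fin n → Bool) → Bool
  | .leaf b, _ => b
  | .node i t0 t1, x => if x i then t1.eval x else t0.eval x

/-- The set of input bits queried by a decision tree on input `x`. -/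
def DTree.queries {n : ℕ} : DTree n → (Fin n → Bool) → Finset (Fin n)
  | .leaf _, _ => ∅
  | .node i t0 t1, x => insert i (if x i then t1.queries x else t0.queries x)

/-- Chain tree: query the bits in order, stop at first `false`. -/
def chain {n : ℕ} : List (Fin n) → DTree n
  | [] => .leaf true
  | j :: L => .node j (.leaf false) (chain L)

lemma chain_eval {n : ℕ} (L : List (Fin n)) (x : Fin n → Bool) :
    (chain L).eval x = decide (∀ j ∈ L, x j = true) := by
  induction L with
  | nil => simp [chain, DTree.eval]
  | cons a L ih =>
    simp only [chain, DTree.eval, ih]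
    by_cases h : x a <;> simp [h]

lemma card_free {n : ℕ} (S : Finset (Fin n)) :
    (univ.filter (fun x : Fin n → Bool => ∀ j ∈ S, x j = true)).card = 2 ^ (n - S.card) := by
  classical
  rw [show (univ.filter (fun x : Fin n → Bool => ∀ j ∈ S, x j = true)).card
      = Fintype.card {x : Fin n → Bool // ∀ j ∈ S, x j = true} from
    (Fintype.card_subtype _).symm]
  have e : {x : Fin n → Bool // ∀ j ∈ S, x j = true} ≃ (↥(Sᶜ : Finset (Fin n)) → Bool) :=
    { toFun := fun x j => x.1 j
      invFun := fun g => ⟨fun j => if h : j ∈ S then true else g ⟨j, by simpa using h⟩,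
        fun j hj => by simp [hj]⟩
      left_inv := by
        rintro ⟨x, hx⟩
        ext j
        by_cases h : j ∈ S <;> simp [h, hx j]
      right_inv := by
        intro g
        ext ⟨j, hj⟩
        have : j ∉ S := by simpa using hj
        simp [this] }
  rw [Fintype.card_congr e]
  simp [Finset.card_compl]

lemma mem_chain_queries {n : ℕ} (L : List (Fin n)) (hL : L.Nodup) (k : ℕ) (hk : k < L.length)
    (x : Fin n → Bool) :
    L.get ⟨k, hk⟩ ∈ (chain L).queries x ↔ ∀ j ∈ L.take k, x j = true := by
  induction L generalizing k with
  | nil => simp at hk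
  | cons a L ih =>
    match k with
    | 0 => simp [chain, DTree.queries]
    | k + 1 =>
      have hk' : k < L.length := by simpa using hk
      have hmem : L[k] ∈ L := List.getElem_mem _
      have hne : ¬ (L[k] = a) := by
        intro h
        exact (List.nodup_cons.1 hL).1 (h ▸ hmem)
      have hget : (a :: L).get ⟨k + 1, hk⟩ = L.get ⟨k, hk'⟩ := rfl
      rw [hget]
      simp only [chain, DTree.queries]
      by_cases hxa : x a
      · have key := ih (List.nodup_cons.1 hL).2 k hk'
        simp only [List.get_eq_getElem] at key
        simp [hxa, hne, key]
      · simp [hxa, hne]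

lemma count_rot {n : ℕ} (r i : Fin n) :
    (univ.filter fun x : Fin n → Bool =>
      i ∈ (chain ((List.finRange n).map (fun k => r + k))).queries x).card
      = 2 ^ (n - ((i - r : Fin n)).val) := by
  classical
  set L := (List.finRange n).map (fun k : Fin n => r + k) with hLdef
  have hlen : L.length = n := by simp [hLdef]
  have hnd : L.Nodup := (List.nodup_finRange n).map (fun a b h => by
    exact add_left_cancel h)
  have hk : ((i - r : Fin n)).val < L.length := by rw [hlen]; exact (i - r).isLt
  have hget : L.get ⟨(i - r).val, hk⟩ = i := by
    simp only [hLdef, List.get_eq_getElem, List.getElem_map, List.getElem_finRange]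
    haveI : NeZero n := ⟨r.pos.ne'⟩
    have h1 : ∀ (c : Fin n), c = i - r → r + c = i := by
      rintro c rfl; exact add_sub_cancel r i
    apply h1
    ext
    simp
  have h2 : ∀ x : Fin n → Bool,
      (i ∈ (chain L).queries x ↔ ∀ j ∈ (L.take (i - r).val).toFinset, x j = true) := by
    intro x
    conv_lhs => rw [← hget]
    rw [mem_chain_queries L hnd _ hk]
    simp
  rw [Finset.filter_congr (fun x _ => by rw [h2 x]), card_free]
  congr 1
  have : (L.take (i - r).val).toFinset.card = (L.take (i - r).val).length :=
    List.toFinset_card_of_nodup (hnd.sublist (List.take_sublist _ _))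
  rw [this, List.length_take]
  omega

lemma sum_rot {n : ℕ} (i : Fin n) :
    ∑ r : Fin n, (2 : ℝ) ^ (n - ((i - r : Fin n)).val) = 2 ^ (n + 1) - 2 := by
  haveI : NeZero n := ⟨i.pos.ne'⟩
  have h0 : ∑ r : Fin n, (2 : ℝ) ^ (n - ((i - r : Fin n)).val)
      = ∑ k : Fin n, (2 : ℝ) ^ (n - k.val) :=
    Fintype.sum_equiv (Equiv.subLeft i) _ _ (fun r => rfl)
  rw [h0, Fin.sum_univ_eq_sum_range (fun k => (2 : ℝ) ^ (n - k)), ← Finset.sum_range_reflect]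
  have h1 : ∀ k ∈ Finset.range n, (2 : ℝ) ^ (n - (n - 1 - k)) = 2 * 2 ^ k := by
    intro k hk
    rw [Finset.mem_range] at hk
    have : n - (n - 1 - k) = k + 1 := by omega
    rw [this, pow_succ]; ring
  rw [Finset.sum_congr rfl h1, ← Finset.mul_sum, geom_sum_eq (by norm_num) n, pow_succ]
  norm_num
  ring

lemma card_free' {n : ℕ} (S : Finset (Fin n)) :
    (univ.filter (fun x : Fin n → Bool => ∀ j, j ∉ S → x j = true)).card = 2 ^ S.card := by
  classical
  have h : ∀ x ∈ (univ : Finset (Fin n → Bool)),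
      ((∀ j, j ∉ S → x j = true) ↔ (∀ j ∈ Sᶜ, x j = true)) := by
    intro x _; simp
  rw [Finset.filter_congr h, card_free, Finset.card_compl]
  have : S.card ≤ n := by simpa using S.card_le_univ
  simp
  omega

lemma key {n : ℕ} (T : DTree n) : ∀ (S : Finset (Fin n)),
    (∀ x : Fin n → Bool, (∀ j, j ∉ S → x j = true) →
      T.eval x = decide (∀ j ∈ S, x j = true)) →
    2 ^ (S.card + 1) ≤
      (∑ x ∈ univ.filter (fun x : Fin n → Bool => ∀ j, j ∉ S → x j = true),
        ((T.queries x) ∩ S).card) + 2 := by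
  classical
  induction T with
  | leaf b =>
    intro S h
    rcases eq_or_ne S ∅ with rfl | hS
    · simp
    · exfalso
      obtain ⟨i, hi⟩ := Finset.nonempty_of_ne_empty hS
      have h1 := h (fun _ => true) (fun _ _ => rfl)
      have h2 := h (fun j => decide (j ≠ i)) (by
        intro j hj
        exact decide_eq_true (show j ≠ i from fun e => hj (e ▸ hi)))
      simp only [DTree.eval] at h1 h2
      rw [show b = true from by rw [h1]; simp] at h2
      have h3 := of_decide_eq_true h2.symm
      have := h3 i hi
      simp at this
  | node i t0 t1 ih0 ih1 =>
    intro S h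
    by_cases hiS : i ∈ S
    · -- main case
      set S' := S.erase i with hS'
      have hcard : S'.card + 1 = S.card := Finset.card_erase_add_one hiS
      have hpt : ∀ x : Fin n → Bool, x i = true →
          (((DTree.node i t0 t1).queries x) ∩ S).card = (t1.queries x ∩ S').card + 1 := by
        intro x hx
        have he : ((DTree.node i t0 t1).queries x) ∩ S = insert i (t1.queries x ∩ S') := by
          simp only [DTree.queries, if_pos hx]
          ext j
          by_cases hj : j = i <;>
            simp [hj, hiS, Finset.mem_insert, Finset.mem_inter, Finset.mem_erase, hS']
        rw [he, Finset.card_insert_of_notMem (by simp [hS'])]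
      have hsplit :
          (∑ x ∈ univ.filter (fun x : Fin n → Bool => ∀ j, j ∉ S → x j = true),
            (((DTree.node i t0 t1).queries x) ∩ S).card)
          = (∑ x ∈ univ.filter
                (fun x : Fin n → Bool => (∀ j, j ∉ S → x j = true) ∧ x i = true),
              (((DTree.node i t0 t1).queries x) ∩ S).card)
          + (∑ x ∈ univ.filter
                (fun x : Fin n → Bool => (∀ j, j ∉ S → x j = true) ∧ ¬ (x i = true)),
              (((DTree.node i t0 t1).queries x) ∩ S).card) := by
        rw [← Finset.sum_filter_add_sum_filter_not
          (univ.filter (fun x : Fin n → Bool => ∀ j, j ∉ S → x j = true))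
          (fun x => x i = true), Finset.filter_filter, Finset.filter_filter]
      have hTset : (univ.filter
            (fun x : Fin n → Bool => (∀ j, j ∉ S → x j = true) ∧ x i = true))
          = univ.filter (fun x : Fin n → Bool => ∀ j, j ∉ S' → x j = true) := by
        ext x
        simp only [Finset.mem_filter, Finset.mem_univ, true_and, hS', Finset.mem_erase]
        constructor
        · rintro ⟨h1, h2⟩ j hj
          by_cases hji : j = i
          · exact hji ▸ h2
          · exact h1 j (fun hjS => hj ⟨hji, hjS⟩)
        · intro h1
          exact ⟨fun j hj => h1 j (fun hj' => hj hj'.2), h1 i (by simp)⟩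
      have ht1 : ∀ x : Fin n → Bool, (∀ j, j ∉ S' → x j = true) →
          t1.eval x = decide (∀ j ∈ S', x j = true) := by
        intro x hx
        have hxi : x i = true := hx i (by simp [hS'])
        have hxS : ∀ j, j ∉ S → x j = true := fun j hj =>
          hx j (fun hj' => hj (Finset.erase_subset _ _ hj'))
        have := h x hxS
        simp only [DTree.eval, if_pos hxi] at this
        rw [this]
        congr 1
        simp only [eq_iff_iff]
        constructor
        · intro hall j hj
          exact hall j (Finset.erase_subset _ _ hj)
        · intro hall j hj
          by_cases hji : j = i
          · exact hji ▸ hxi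
          · exact hall j (Finset.mem_erase.2 ⟨hji, hj⟩)
      have IH := ih1 S' ht1
      have htrue :
          (∑ x ∈ univ.filter
              (fun x : Fin n → Bool => (∀ j, j ∉ S → x j = true) ∧ x i = true),
            (((DTree.node i t0 t1).queries x) ∩ S).card)
          = (∑ x ∈ univ.filter (fun x : Fin n → Bool => ∀ j, j ∉ S' → x j = true),
              (t1.queries x ∩ S').card)
            + (univ.filter (fun x : Fin n → Bool => ∀ j, j ∉ S' → x j = true)).card := by
        rw [hTset]
        have hxx : ∀ x ∈ univ.filter (fun x : Fin n → Bool => ∀ j, j ∉ S' → x j = true),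
            (((DTree.node i t0 t1).queries x) ∩ S).card = (t1.queries x ∩ S').card + 1 := by
          intro x hx
          exact hpt x ((Finset.mem_filter.1 hx).2 i (by simp [hS']))
        rw [Finset.sum_congr rfl hxx]
        rw [Finset.sum_add_distrib, Finset.sum_const, smul_eq_mul, mul_one]
      have hfalse :
          (univ.filter
            (fun x : Fin n → Bool => (∀ j, j ∉ S → x j = true) ∧ ¬ (x i = true))).card
          ≤ (∑ x ∈ univ.filter
              (fun x : Fin n → Bool => (∀ j, j ∉ S → x j = true) ∧ ¬ (x i = true)),
            (((DTree.node i t0 t1).queries x) ∩ S).card) := by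
        refine Finset.card_nsmul_le_sum _ _ 1 ?_ |>.trans_eq' (by simp)
        intro x hx
        refine Finset.card_pos.2 ⟨i, ?_⟩
        simp [DTree.queries, Finset.mem_inter, hiS]
      have hcount : 2 ^ S'.card ≤ (univ.filter
            (fun x : Fin n → Bool => (∀ j, j ∉ S → x j = true) ∧ ¬ (x i = true))).card := by
        rw [← card_free' S', ← hTset]
        apply Finset.card_le_card_of_injOn (fun x => Function.update x i false)
        · intro x hx
          simp only [Finset.mem_coe, Finset.mem_filter, Finset.mem_univ, true_and] at hx ⊢
          refine ⟨fun j hj => ?_, by simp⟩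
          have hji : j ≠ i := fun e => hj (e ▸ hiS)
          rw [Function.update_of_ne hji]
          exact hx.1 j hj
        · intro x hx y hy hxy
          simp only [Finset.mem_coe, Finset.mem_filter, Finset.mem_univ, true_and] at hx hy
          funext j
          by_cases hji : j = i
          · rw [hji, hx.2, hy.2]
          · have h5 : Function.update x i false j = Function.update y i false j :=
              congrFun hxy j
            rwa [Function.update_of_ne hji, Function.update_of_ne hji] at h5
      have hc' := card_free' S'
      have hpow3 : 2 ^ S.card = 2 * 2 ^ S'.card := by rw [← hcard]; ring
      have hpow2 : 2 ^ (S.card + 1) = 2 * 2 ^ S.card := by ring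
      have hpow1 : 2 ^ (S'.card + 1) = 2 * 2 ^ S'.card := by ring
      rw [hsplit, htrue]
      clear hsplit htrue hpt ht1 h hTset ih0 ih1
      generalize (∑ x ∈ univ.filter (fun x : Fin n → Bool => ∀ j, j ∉ S' → x j = true),
        (t1.queries x ∩ S').card) = a at IH ⊢
      generalize (∑ x ∈ univ.filter
          (fun x : Fin n → Bool => (∀ j, j ∉ S → x j = true) ∧ ¬ (x i = true)),
        (((DTree.node i t0 t1).queries x) ∩ S).card) = b at hfalse ⊢
      clear_value S'
      rw [hc', hpow2, hpow3]
      rw [hpow1] at IH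
      generalize (2 : ℕ) ^ S'.card = P at IH hcount ⊢
      generalize ((univ.filter
          (fun x : Fin n → Bool => (∀ j, j ∉ S → x j = true) ∧ ¬ (x i = true))).card) = c
        at hfalse hcount
      clear hc' hpow1 hpow2 hpow3 hcard hS' hiS
      omega
    · have ht1 : ∀ x : Fin n → Bool, (∀ j, j ∉ S → x j = true) →
          t1.eval x = decide (∀ j ∈ S, x j = true) := by
        intro x hx
        have hxi : x i = true := hx i hiS
        have := h x hx
        simpa only [DTree.eval, if_pos hxi] using this
      have IH := ih1 S ht1
      refine IH.trans (Nat.add_le_add_right (Finset.sum_le_sum ?_) 2)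
      intro x hx
      simp only [Finset.mem_filter] at hx
      have hxi : x i = true := hx.2 i hiS
      simp only [DTree.queries, if_pos hxi]
      rw [Finset.insert_inter_of_notMem hiS]

lemma swap_sum {n : ℕ} (T : DTree n) :
    ∑ i : Fin n, (univ.filter (fun x : Fin n → Bool => i ∈ T.queries x)).card
      = ∑ x : Fin n → Bool, (T.queries x).card := by
  classical
  simp_rw [Finset.card_filter]
  rw [Finset.sum_comm]
  refine Finset.sum_congr rfl (fun x _ => ?_)
  rw [Finset.sum_ite_mem, Finset.univ_inter]
  simp

/-- **Theorem.**  The minimal possible revealment over all randomized decision-tree algorithms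
determining the AND function `f(x) = ∏_{j=1}^n x_j` on `{0,1}ⁿ` is exactly `(2 - 2^{1-n})/n`.
Here an algorithm is a probability distribution `ρ` over decision trees, each of which computes
AND, and its revealment is `max_{i} P[i is queried]` where the probability is over both the
uniform random input and the algorithm's randomness. -/
theorem and_minimal_revealment {n : ℕ} (hn : 0 < n) :
    IsLeast
      {δ : ℝ | ∃ (R : Type) (_ : Fintype R) (ρ : R → ℝ) (T : R → DTree n),
        (∀ r, 0 ≤ ρ r) ∧ (∑ r, ρ r = 1) ∧
        (∀ r x, (T r).eval x = decide (∀ i, x i = true)) ∧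
        (∀ i : Fin n,
          (∑ r, ρ r * ((Finset.univ.filter
              (fun x : Fin n → Bool => i ∈ (T r).queries x)).card : ℝ)) / 2 ^ n ≤ δ) ∧
        (∃ i : Fin n,
          (∑ r, ρ r * ((Finset.univ.filter
              (fun x : Fin n → Bool => i ∈ (T r).queries x)).card : ℝ)) / 2 ^ n = δ)}
      ((2 - (2 : ℝ) ^ ((1 : ℤ) - (n : ℤ))) / n) := by
  classical
  haveI : NeZero n := ⟨hn.ne'⟩
  have h2n : (0 : ℝ) < 2 ^ n := by positivity
  have hn0 : (0 : ℝ) < (n : ℝ) := by exact_mod_cast hn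
  have hz : (2 : ℝ) ^ ((1 : ℤ) - (n : ℤ)) = 2 / 2 ^ n := by
    rw [zpow_sub₀ (two_ne_zero), zpow_one, zpow_natCast]
  constructor
  · -- membership : the rotation algorithm
    set Trees : Fin n → DTree n :=
      fun r => chain ((List.finRange n).map (fun k => r + k)) with hT
    have hval : ∀ i : Fin n,
        (∑ r : Fin n, (n : ℝ)⁻¹ *
            (((univ.filter (fun x : Fin n → Bool => i ∈ (Trees r).queries x)).card : ℝ)))
            / 2 ^ n
          = (2 - (2 : ℝ) ^ ((1 : ℤ) - (n : ℤ))) / n := by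
      intro i
      have hc : ∀ r : Fin n,
          (((univ.filter (fun x : Fin n → Bool => i ∈ (Trees r).queries x)).card : ℝ))
            = 2 ^ (n - ((i - r : Fin n)).val) := by
        intro r
        rw [hT]
        exact_mod_cast congrArg (Nat.cast : ℕ → ℝ) (count_rot r i)
      rw [Finset.sum_congr rfl (fun r _ => by rw [hc r]), ← Finset.mul_sum, sum_rot i, hz]
      field_simp
      rw [pow_succ]
      ring
    refine ⟨Fin n, inferInstance, fun _ => (n : ℝ)⁻¹, Trees, fun _ => by positivity, ?_, ?_,
      fun i => le_of_eq (hval i), ⟨⟨0, hn⟩, hval _⟩⟩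
    · simp
    · intro r x
      rw [hT]
      rw [chain_eval]
      simp only [decide_eq_decide]
      constructor
      · intro hall i
        refine hall i (List.mem_map.2 ⟨i - r, List.mem_finRange _, ?_⟩)
        exact add_sub_cancel r i
      · intro hall j _
        exact hall j
  · -- lower bound
    rintro δ ⟨R, instR, ρ, T, hnn, hsum1, heval, hle, -⟩
    have hkey : ∀ r : R, (2 : ℝ) ^ (n + 1) - 2 ≤ ∑ i : Fin n,
        ((univ.filter (fun x : Fin n → Bool => i ∈ (T r).queries x)).card : ℝ) := by
      intro r
      have hk := key (T r) univ (by
        intro x _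
        rw [heval r x]
        simp)
      simp only [Finset.inter_univ, Finset.card_univ, Fintype.card_fin] at hk
      rw [Finset.filter_true_of_mem
        (fun x _ => fun j hj => absurd (Finset.mem_univ j) hj)] at hk
      rw [← swap_sum (T r)] at hk
      have h' := (Nat.cast_le (α := ℝ)).2 hk
      push_cast at h'
      linarith
    have e1 : ∀ i : Fin n, (∑ r, ρ r *
        ((univ.filter (fun x : Fin n → Bool => i ∈ (T r).queries x)).card : ℝ))
        ≤ δ * 2 ^ n := by
      intro i
      have := hle i
      rwa [div_le_iff₀ h2n] at this
    have e3 : (2 : ℝ) ^ (n + 1) - 2 ≤ ∑ i : Fin n, ∑ r, ρ r *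
        ((univ.filter (fun x : Fin n → Bool => i ∈ (T r).queries x)).card : ℝ) := by
      rw [Finset.sum_comm]
      have hms : ∀ r : R, (∑ i : Fin n, ρ r *
          ((univ.filter (fun x : Fin n → Bool => i ∈ (T r).queries x)).card : ℝ))
          = ρ r * ∑ i : Fin n,
          ((univ.filter (fun x : Fin n → Bool => i ∈ (T r).queries x)).card : ℝ) :=
        fun r => (Finset.mul_sum _ _ _).symm
      rw [Finset.sum_congr rfl (fun r _ => hms r)]
      calc (2 : ℝ) ^ (n + 1) - 2 = ∑ r, ρ r * ((2 : ℝ) ^ (n + 1) - 2) := by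
            rw [← Finset.sum_mul, hsum1, one_mul]
        _ ≤ _ := Finset.sum_le_sum (fun r _ => mul_le_mul_of_nonneg_left (hkey r) (hnn r))
    have e2 : (∑ i : Fin n, ∑ r, ρ r *
        ((univ.filter (fun x : Fin n → Bool => i ∈ (T r).queries x)).card : ℝ))
        ≤ (n : ℝ) * (δ * 2 ^ n) := by
      calc _ ≤ ∑ _i : Fin n, δ * 2 ^ n := Finset.sum_le_sum (fun i _ => e1 i)
        _ = (n : ℝ) * (δ * 2 ^ n) := by
            rw [Finset.sum_const, Finset.card_univ, Fintype.card_fin, nsmul_eq_mul]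
    have hmain : (2 : ℝ) ^ (n + 1) - 2 ≤ (n : ℝ) * (δ * 2 ^ n) := e3.trans e2
    rw [div_le_iff₀ hn0, hz]
    have h1 : (2 - 2 / 2 ^ n) * 2 ^ n = (2 : ℝ) ^ (n + 1) - 2 := by
      field_simp
      ring
    have h2 : (δ * n) * 2 ^ n = (n : ℝ) * (δ * 2 ^ n) := by ring
    have := hmain
    rw [← h1, ← h2] at this
    exact le_of_mul_le_mul_right this h2n
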